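/- Let n be a positive integer and let S be a subset of Z_n with 0 ∉ S and S = −S. A subset C of Z_n is a perfect code in the circulant graph Cay(Z_n, S) if and only if there exists a polynomial q(x) ∈ Z[x] such that f_C(x) · f_{S∪{0}}(x) = (x^n − 1) q(x) + (x^{n−1} + x^{n−2} + ··· + x + 1). -/

import Mathlib

open Polynomial

/-- The circulant graph `Cay(Z_n, S)`: vertices are `ZMod n`, and `u, v` are adjacent
iff `v - u ∈ S` (here symmetrised; when `S = -S` this agrees with the usual definition). -/
def circulantGraph (n : ℕ) (S : Finset (ZMod n)) : SimpleGraph (ZMod n) :=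
  SimpleGraph.fromRel (fun u v => v - u ∈ S)

/-- `C` is a perfect code in `G`: an independent set such that every vertex outside `C`
is adjacent to exactly one vertex of `C`. -/
def IsPerfectCode {V : Type*} (G : SimpleGraph V) (C : Set V) : Prop :=
  (∀ u ∈ C, ∀ v ∈ C, ¬ G.Adj u v) ∧ ∀ v, v ∉ C → ∃! c, c ∈ C ∧ G.Adj v c

/-- `C` is a total perfect code in `G`: every vertex is adjacent to exactly one vertex of `C`. -/
def IsTotalPerfectCode {V : Type*} (G : SimpleGraph V) (C : Set V) : Prop :=
  ∀ v, ∃! c, c ∈ C ∧ G.Adj v c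

private lemma dvd_pow_sub_pow_mod (n a : ℕ) :
    ((X : ℤ[X]) ^ n - 1) ∣ (X : ℤ[X]) ^ a - X ^ (a % n) := by
  have h : (X:ℤ[X])^a - X^(a%n) = ((X^n)^(a/n) - 1) * X^(a%n) := by
    rw [sub_mul, one_mul, ← pow_mul, ← pow_add, Nat.div_add_mod]
  rw [h]
  exact Dvd.dvd.mul_right (by simpa using sub_dvd_pow_sub_pow ((X:ℤ[X])^n) 1 (a/n)) _

private lemma circ_adj_iff (n : ℕ) (S : Finset (ZMod n)) (h0S : (0:ZMod n) ∉ S)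
    (hSneg : ∀ s ∈ S, -s ∈ S) (u v : ZMod n) :
    (circulantGraph n S).Adj u v ↔ v - u ∈ S := by
  simp only [circulantGraph, SimpleGraph.fromRel_adj]
  constructor
  · rintro ⟨hne, h | h⟩
    · exact h
    · simpa using hSneg _ h
  · intro h
    refine ⟨fun he => h0S (by simpa [he] using h), Or.inl h⟩

private lemma card_filter_eq_one_iff {α : Type*} (s : Finset α) (p : α → Prop)
    [DecidablePred p] :
    (s.filter p).card = 1 ↔ ∃! a, a ∈ s ∧ p a := by
  rw [Finset.card_eq_one]
  constructor
  · rintro ⟨a, ha⟩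
    have hma : a ∈ s.filter p := ha ▸ Finset.mem_singleton_self a
    refine ⟨a, by simpa [Finset.mem_filter] using hma, fun b hb => ?_⟩
    have : b ∈ s.filter p := Finset.mem_filter.2 ⟨hb.1, hb.2⟩
    rw [ha, Finset.mem_singleton] at this
    exact this
  · rintro ⟨a, ha, hu⟩
    refine ⟨a, Finset.eq_singleton_iff_unique_mem.2
      ⟨Finset.mem_filter.2 ⟨ha.1, ha.2⟩, fun b hb => ?_⟩⟩
    have := Finset.mem_filter.1 hb
    exact hu b ⟨this.1, this.2⟩

/-- **Lemma 2.2.** `C ⊆ Z_n` is a perfect code in `Cay(Z_n, S)` iff there is `q(x) ∈ ℤ[x]` with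
`f_C(x) · f_{S∪{0}}(x) = (x^n - 1) q(x) + (x^{n-1} + ⋯ + x + 1)`. -/
theorem circulant_perfectCode_iff_poly
    (n : ℕ) (hn : 0 < n) (S : Finset (ZMod n))
    (h0S : (0 : ZMod n) ∉ S) (hSneg : ∀ s ∈ S, -s ∈ S) (C : Finset (ZMod n)) :
    IsPerfectCode (circulantGraph n S) ↑C ↔
      ∃ q : ℤ[X],
        (∑ c ∈ C, (X : ℤ[X]) ^ c.val) * (∑ s ∈ insert (0 : ZMod n) S, (X : ℤ[X]) ^ s.val) =
          (X ^ n - 1) * q + ∑ i ∈ Finset.range n, (X : ℤ[X]) ^ i := by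
  haveI : NeZero n := ⟨hn.ne'⟩
  set S0 : Finset (ZMod n) := insert (0 : ZMod n) S with hS0def
  have hadj : ∀ u v : ZMod n, (circulantGraph n S).Adj u v ↔ v - u ∈ S :=
    circ_adj_iff n S h0S hSneg
  -- Step 1: perfect code ↔ unique pairs
  have step1 : IsPerfectCode (circulantGraph n S) ↑C ↔
      ∀ v : ZMod n, ∃! p : ZMod n × ZMod n, (p.1 ∈ C ∧ p.2 ∈ S0) ∧ p.1 + p.2 = v := by
    constructor
    · rintro ⟨hind, hdom⟩ v
      by_cases hv : v ∈ C
      · refine ⟨(v, 0), ⟨⟨hv, Finset.mem_insert_self _ _⟩, add_zero v⟩, ?_⟩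
        rintro ⟨c, s⟩ ⟨⟨hc, hs⟩, hsum⟩
        rcases Finset.mem_insert.mp hs with h0 | hsS
        · subst h0
          simp only [add_zero] at hsum
          simp [hsum]
        · exfalso
          refine hind c (by exact_mod_cast hc) v (by exact_mod_cast hv)
            ((hadj c v).2 ?_)
          have : s = v - c := by rw [← hsum]; ring
          rwa [← this]
      · obtain ⟨c, ⟨hc, hadjc⟩, huniq⟩ := hdom v (by exact_mod_cast hv)
        have hcv : c - v ∈ S := (hadj v c).1 hadjc
        have hvc : v - c ∈ S := by simpa using hSneg _ hcv
        refine ⟨(c, v - c), ⟨⟨by exact_mod_cast hc, Finset.mem_insert_of_mem hvc⟩,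
          by ring⟩, ?_⟩
        rintro ⟨c', s'⟩ ⟨⟨hc', hs'⟩, hsum⟩
        rcases Finset.mem_insert.mp hs' with h0 | hsS
        · exfalso
          subst h0
          have : c' = v := by simpa using hsum
          exact hv (this ▸ hc')
        · have hs'eq : s' = v - c' := by rw [← hsum]; ring
          have : (circulantGraph n S).Adj v c' := (hadj v c').2 (by
            have : c' - v = -s' := by rw [hs'eq]; ring
            rw [this]; exact hSneg _ hsS)
          have hc'c : c' = c := huniq c' ⟨by exact_mod_cast hc', this⟩
          subst hc'c
          simp [hs'eq]
    · intro h
      constructor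
      · intro u hu v hv hadjuv
        have hvu : v - u ∈ S := (hadj u v).1 hadjuv
        obtain ⟨p, _, hp⟩ := h v
        have h1 : ((v : ZMod n), (0 : ZMod n)) = p :=
          hp _ ⟨⟨by exact_mod_cast hv, Finset.mem_insert_self _ _⟩, add_zero v⟩
        have h2 : ((u : ZMod n), v - u) = p :=
          hp _ ⟨⟨by exact_mod_cast hu, Finset.mem_insert_of_mem hvu⟩, by ring⟩
        have : (0 : ZMod n) = v - u := by
          have := h1.trans h2.symm
          exact (Prod.ext_iff.1 this).2
        exact h0S (this ▸ hvu)
      · intro v hv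
        obtain ⟨⟨c, s⟩, ⟨⟨hc, hs⟩, hsum⟩, huniq⟩ := h v
        have hsS : s ∈ S := by
          rcases Finset.mem_insert.mp hs with h0 | hsS
          · exfalso
            subst h0
            have : c = v := by simpa using hsum
            exact hv (this ▸ hc)
          · exact hsS
        have hadjvc : (circulantGraph n S).Adj v c := (hadj v c).2 (by
          have : c - v = -s := by rw [← hsum]; ring
          rw [this]; exact hSneg _ hsS)
        refine ⟨c, ⟨by exact_mod_cast hc, hadjvc⟩, ?_⟩
        rintro c' ⟨hc', hadjvc'⟩
        have hcv' : c' - v ∈ S := (hadj v c').1 hadjvc'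
        have hvc' : v - c' ∈ S := by simpa using hSneg _ hcv'
        have := huniq (c', v - c') ⟨⟨by exact_mod_cast hc',
          Finset.mem_insert_of_mem hvc'⟩, by ring⟩
        exact (Prod.ext_iff.1 this).1
  -- Step 2: unique pairs ↔ fiber cards are 1
  have step2 : (∀ v : ZMod n, ∃! p : ZMod n × ZMod n,
        (p.1 ∈ C ∧ p.2 ∈ S0) ∧ p.1 + p.2 = v) ↔
      ∀ v : ZMod n, ((C ×ˢ S0).filter (fun p => p.1 + p.2 = v)).card = 1 := by
    apply forall_congr'
    intro v
    rw [card_filter_eq_one_iff]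
    constructor
    · rintro ⟨p, ⟨hp1, hp2⟩, hu⟩
      exact ⟨p, ⟨Finset.mem_product.2 hp1, hp2⟩, fun q hq =>
        hu q ⟨Finset.mem_product.1 hq.1, hq.2⟩⟩
    · rintro ⟨p, ⟨hp1, hp2⟩, hu⟩
      exact ⟨p, ⟨Finset.mem_product.1 hp1, hp2⟩, fun q hq =>
        hu q ⟨Finset.mem_product.2 hq.1, hq.2⟩⟩
  -- the "reduced" polynomial
  set T : ℤ[X] := ∑ p ∈ C ×ˢ S0, X ^ ((p.1 + p.2).val) with hTdef
  set G : ℤ[X] := ∑ i ∈ Finset.range n, (X : ℤ[X]) ^ i with hGdef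
  set P : ℤ[X] := (∑ c ∈ C, (X : ℤ[X]) ^ c.val) * (∑ s ∈ S0, (X : ℤ[X]) ^ s.val) with hPdef
  -- Step 3: (X^n - 1) ∣ P - T
  have hPT : ((X : ℤ[X]) ^ n - 1) ∣ P - T := by
    rw [hPdef, Finset.sum_mul_sum, ← Finset.sum_product', hTdef, ← Finset.sum_sub_distrib]
    apply Finset.dvd_sum
    intro p _
    rw [← pow_add]
    have := dvd_pow_sub_pow_mod n (p.1.val + p.2.val)
    rwa [← ZMod.val_add] at this
  -- Step 4: the existence of q is equivalent to T = G
  have step4 : (∃ q : ℤ[X], P = (X ^ n - 1) * q + G) ↔ T = G := by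
    constructor
    · rintro ⟨q, hq⟩
      have h1 : ((X : ℤ[X]) ^ n - 1) ∣ P - G := ⟨q, by rw [hq]; ring⟩
      have hdvd : ((X : ℤ[X]) ^ n - 1) ∣ T - G := by
        have h2 := dvd_sub h1 hPT
        have : P - G - (P - T) = T - G := by ring
        rwa [this] at h2
      have hdegT : T.degree < (n : WithBot ℕ) := by
        apply lt_of_le_of_lt (Polynomial.degree_sum_le _ _)
        rw [Finset.sup_lt_iff (by exact_mod_cast WithBot.bot_lt_coe n)]
        intro p _
        rw [Polynomial.degree_X_pow]
        exact_mod_cast ZMod.val_lt _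
      have hdegG : G.degree < (n : WithBot ℕ) := by
        apply lt_of_le_of_lt (Polynomial.degree_sum_le _ _)
        rw [Finset.sup_lt_iff (by exact_mod_cast WithBot.bot_lt_coe n)]
        intro i hi
        rw [Polynomial.degree_X_pow]
        exact_mod_cast Finset.mem_range.1 hi
      have hdeg : (T - G).degree < ((X : ℤ[X]) ^ n - 1).degree := by
        rw [show ((X : ℤ[X]) ^ n - 1) = X ^ n - Polynomial.C 1 by simp,
          Polynomial.degree_X_pow_sub_C hn]
        exact lt_of_le_of_lt (Polynomial.degree_sub_le _ _) (max_lt hdegT hdegG)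
      have := Polynomial.eq_zero_of_dvd_of_degree_lt hdvd hdeg
      exact sub_eq_zero.1 this
    · intro hTG
      obtain ⟨q, hq⟩ := hPT
      exact ⟨q, by rw [← hTG]; linear_combination hq⟩
  -- Step 5: T = G ↔ all fiber cards are 1
  have step5 : T = G ↔
      ∀ v : ZMod n, ((C ×ˢ S0).filter (fun p => p.1 + p.2 = v)).card = 1 := by
    constructor
    · intro hTG v
      have hcoeff : T.coeff v.val = G.coeff v.val := by rw [hTG]
      have hT : T.coeff v.val =
          (((C ×ˢ S0).filter (fun p => p.1 + p.2 = v)).card : ℤ) := by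
        rw [hTdef, Polynomial.finset_sum_coeff]
        simp only [Polynomial.coeff_X_pow]
        rw [Finset.sum_boole]
        congr 1
        apply Finset.card_nbij id (fun p hp => ?_) (fun p hp q hq h => h)
          (fun p hp => ?_)
        · simp only [Finset.mem_coe, Finset.mem_filter] at hp ⊢
          exact ⟨hp.1, ZMod.val_injective n hp.2.symm⟩
        · refine ⟨p, ?_, rfl⟩
          simp only [Finset.mem_coe, Finset.mem_filter] at hp ⊢
          exact ⟨hp.1, by rw [hp.2]⟩
      have hG : G.coeff v.val = 1 := by
        rw [hGdef, Polynomial.finset_sum_coeff]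
        simp only [Polynomial.coeff_X_pow]
        rw [Finset.sum_ite_eq]
        simp [ZMod.val_lt v]
      rw [hT, hG] at hcoeff
      exact_mod_cast hcoeff
    · intro hcard
      rw [hTdef, hGdef]
      rw [← Finset.sum_fiberwise_of_maps_to
        (fun p (_ : p ∈ C ×ˢ S0) => Finset.mem_univ (p.1 + p.2))
        (fun p => (X : ℤ[X]) ^ ((p.1 + p.2).val))]
      have : ∀ v : ZMod n, (∑ p ∈ (C ×ˢ S0).filter (fun p => p.1 + p.2 = v),
          (X : ℤ[X]) ^ ((p.1 + p.2).val)) = X ^ v.val := by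
        intro v
        rw [Finset.sum_congr rfl (fun p hp => by
          rw [(Finset.mem_filter.1 hp).2]), Finset.sum_const, hcard v, one_smul]
      rw [Finset.sum_congr rfl (fun v _ => this v)]
      refine Finset.sum_nbij' (i := fun v : ZMod n => v.val)
        (j := fun i : ℕ => (i : ZMod n)) ?_ ?_ ?_ ?_ ?_
      · intro v _; exact Finset.mem_range.2 (ZMod.val_lt v)
      · intro i _; exact Finset.mem_univ _
      · intro v _; simp [ZMod.natCast_val, ZMod.cast_id]
      · intro i hi; exact ZMod.val_cast_of_lt (Finset.mem_range.1 hi)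
      · intro v _; rfl
  rw [step1, step2, ← step5, ← step4]
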